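/- Let c be a point in the Euclidean plane ℝ² and r ≥ 0. Let s be a point with dist(c,s) = r and let x = 2c − s be its antipodal point on the circle of radius r centered at c. Let v₁ and v₂ be points such that dist(v₁,c) ≤ r, dist(v₂,x) ≤ 2r, and dist(v₂,s) ≤ dist(v₁,v₂). Then the midpoint o of v₁ and v₂ satisfies dist(o,c) ≤ r. -/
import Mathlib

lemma dist_sq_eq (p q : EuclideanSpace ℝ (Fin 2)) :
    dist p q ^ 2 = (p 0 - q 0) ^ 2 + (p 1 - q 1) ^ 2 := by
  rw [EuclideanSpace.dist_eq, Real.sq_sqrt]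
  · simp [Fin.sum_univ_two, Real.dist_eq, sq_abs]
  · positivity

theorem stmt_2 (c s x v₁ v₂ : EuclideanSpace ℝ (Fin 2)) (r : ℝ) (hr : 0 ≤ r)
    (hs : dist c s = r) (hx : x = (2 : ℝ) • c - s)
    (hv₁ : dist v₁ c ≤ r) (hv₂x : dist v₂ x ≤ 2 * r)
    (hv₂s : dist v₂ s ≤ dist v₁ v₂) :
    dist (midpoint ℝ v₁ v₂) c ≤ r := by
  have hx0 : x 0 = 2 * c 0 - s 0 := by rw [hx]; simp
  have hx1 : x 1 = 2 * c 1 - s 1 := by rw [hx]; simp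
  have hm0 : midpoint ℝ v₁ v₂ 0 = (v₁ 0 + v₂ 0) / 2 := by
    simp [midpoint_eq_smul_add]; ring
  have hm1 : midpoint ℝ v₁ v₂ 1 = (v₁ 1 + v₂ 1) / 2 := by
    simp [midpoint_eq_smul_add]; ring
  have hs2 : dist c s ^ 2 = r ^ 2 := by rw [hs]
  have hv₁2 : dist v₁ c ^ 2 ≤ r ^ 2 := by
    apply pow_le_pow_left₀ dist_nonneg hv₁
  have hv₂x2 : dist v₂ x ^ 2 ≤ (2 * r) ^ 2 := by
    apply pow_le_pow_left₀ dist_nonneg hv₂x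
  have hv₂s2 : dist v₂ s ^ 2 ≤ dist v₁ v₂ ^ 2 := by
    apply pow_le_pow_left₀ dist_nonneg hv₂s
  rw [dist_sq_eq] at hs2 hv₁2 hv₂x2 hv₂s2
  have key : dist (midpoint ℝ v₁ v₂) c ^ 2 ≤ r ^ 2 := by
    rw [dist_sq_eq, hm0, hm1]
    rw [hx0, hx1] at hv₂x2
    rw [dist_sq_eq] at hv₂s2
    nlinarith [hs2, hv₁2, hv₂x2, hv₂s2]
  nlinarith [dist_nonneg (x := midpoint ℝ v₁ v₂) (y := c), key, hr]
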